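/- If A(x) and B(x) are continuous matrix-valued functions such that all values A(x), B(y) commute with each other, then the product integral of A+B factorizes: ∏_s^t (I + (A(x)+B(x)) dx) = ∏_s^t (I + A(x) dx) · ∏_s^t (I + B(x) dx). In particular, for a scalar function r and matrix function M with commuting values, ∏_s^t (I + (M(x) − r(x)I) dx) = exp(−∫_s^t r(x) dx) · ∏_s^t (I + M(x) dx). -/

import Mathlib

open Matrix MeasureTheory

attribute [local instance] Matrix.linftyOpNormedRing Matrix.linftyOpNormedAlgebra

section Aux
open Set

/-- On [a,b], a solution of `f' = f * C` vanishing at `a` vanishes at `b`. -/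
lemma linODE_zero_right {p : ℕ} (C : ℝ → Matrix (Fin p) (Fin p) ℝ) (hC : Continuous C)
    (f : ℝ → Matrix (Fin p) (Fin p) ℝ)
    (hf : ∀ t, HasDerivAt f (f t * C t) t) {a b : ℝ} (hab : a ≤ b) (h0 : f a = 0) :
    f b = 0 := by
  obtain ⟨K, hK⟩ := (isCompact_Icc (a := a) (b := b)).exists_bound_of_continuousOn
    (hC.continuousOn.norm)
  have key : ∀ x ∈ Icc a b, ‖f x‖ ≤ gronwallBound 0 (max K 0) 0 (x - a) := by
    refine norm_le_gronwallBound_of_norm_deriv_right_le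
      (fun x _ => (hf x).continuousAt.continuousWithinAt)
      (fun x _ => (hf x).hasDerivWithinAt) (by simp [h0]) ?_
    intro x hx
    calc ‖f x * C x‖ ≤ ‖f x‖ * ‖C x‖ := norm_mul_le _ _
      _ ≤ ‖f x‖ * max K 0 := by
          exact mul_le_mul_of_nonneg_left (le_trans (by simpa using hK x (Ico_subset_Icc_self hx)) (le_max_left _ _)) (norm_nonneg _)
      _ = max K 0 * ‖f x‖ + 0 := by ring
  have := key b ⟨hab, le_rfl⟩
  rw [gronwallBound_ε0_δ0] at this
  exact norm_le_zero_iff.mp this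

lemma linODE_zero {p : ℕ} (C : ℝ → Matrix (Fin p) (Fin p) ℝ) (hC : Continuous C)
    (f : ℝ → Matrix (Fin p) (Fin p) ℝ)
    (hf : ∀ t, HasDerivAt f (f t * C t) t) (s : ℝ) (h0 : f s = 0) (t : ℝ) :
    f t = 0 := by
  rcases le_total s t with h | h
  · exact linODE_zero_right C hC f hf h h0
  · -- reverse time
    have hg : ∀ u, HasDerivAt (fun u => f (2 * s - u)) (f (2 * s - u) * -(C (2 * s - u))) u := by
      intro u
      have h1 : HasDerivAt (fun u : ℝ => 2 * s - u) (-1) u := by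
        simpa using (hasDerivAt_id u).const_sub (2 * s)
      have := (hf (2 * s - u)).scomp u h1
      exact this.congr_deriv (by simp [mul_neg])
    have := linODE_zero_right (fun u => -(C (2 * s - u)))
      ((hC.comp (by continuity)).neg) _ hg (a := s) (b := 2 * s - t) (by linarith) (by rw [show (2:ℝ)*s - s = s by ring, h0])
    rwa [show (2:ℝ)*s - (2*s - t) = t by ring] at this

end Aux

/-- If `A` and `B` are continuous matrix functions whose values all commute
with each other, then the product integral of `A + B` factorizes as the product of the
product integrals of `A` and of `B`.  In particular, for a scalar function `r` and a matrix
function `M` with commuting values, the product integral of `M - r • 1` equals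
`exp (-∫ r) • (product integral of M)`.  Product integrals are characterized as solutions of
the forward equation `∂/∂t F (s, t) = F (s, t) * A t`, `F (s, s) = 1`. -/
theorem productIntegral_add_of_commute {p : ℕ}
    (A B : ℝ → Matrix (Fin p) (Fin p) ℝ) (hA : Continuous A) (hB : Continuous B)
    (hcomm : ∀ x y : ℝ, Commute (A x) (B y))
    (FA FB FAB : ℝ → ℝ → Matrix (Fin p) (Fin p) ℝ)
    (hFA : ∀ s t : ℝ, HasDerivAt (fun u => FA s u) (FA s t * A t) t)
    (hFA0 : ∀ s : ℝ, FA s s = 1)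
    (hFB : ∀ s t : ℝ, HasDerivAt (fun u => FB s u) (FB s t * B t) t)
    (hFB0 : ∀ s : ℝ, FB s s = 1)
    (hFAB : ∀ s t : ℝ, HasDerivAt (fun u => FAB s u) (FAB s t * (A t + B t)) t)
    (hFAB0 : ∀ s : ℝ, FAB s s = 1)
    -- data for the particular case: a scalar function `r`, a matrix function `M` with
    -- commuting values, and the product integrals of `M` and of `M - r • 1`
    (r : ℝ → ℝ) (M : ℝ → Matrix (Fin p) (Fin p) ℝ) (hr : Continuous r) (hM : Continuous M)
    (hMcomm : ∀ x y : ℝ, Commute (M x) (M y))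
    (FM FMr : ℝ → ℝ → Matrix (Fin p) (Fin p) ℝ)
    (hFM : ∀ s t : ℝ, HasDerivAt (fun u => FM s u) (FM s t * M t) t)
    (hFM0 : ∀ s : ℝ, FM s s = 1)
    (hFMr : ∀ s t : ℝ, HasDerivAt (fun u => FMr s u) (FMr s t * (M t - r t • 1)) t)
    (hFMr0 : ∀ s : ℝ, FMr s s = 1) :
    (∀ s t : ℝ, FAB s t = FA s t * FB s t) ∧
      (∀ s t : ℝ, FMr s t = Real.exp (-∫ x in s..t, r x) • FM s t) := by
  constructor
  · intro s t
    -- values of A commute with FB s v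
    have hABcomm : ∀ u v : ℝ, A u * FB s v = FB s v * A u := by
      intro u v
      have hder : ∀ w : ℝ, HasDerivAt (fun w => A u * FB s w - FB s w * A u)
          ((A u * FB s w - FB s w * A u) * B w) w := by
        intro w
        have h1 := (hFB s w).const_mul (A u)
        have h2 := (hFB s w).mul_const (A u)
        refine (h1.sub h2).congr_deriv (Eq.symm ?_)
        simp only [sub_mul, mul_assoc]
        rw [(hcomm u w).eq]
      have := linODE_zero B hB _ hder s (by simp [hFB0]) v
      exact sub_eq_zero.mp this
    have hD : ∀ v : ℝ, HasDerivAt (fun v => FAB s v - FA s v * FB s v)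
        ((FAB s v - FA s v * FB s v) * (A v + B v)) v := by
      intro v
      have h2 := (hFA s v).mul (hFB s v)
      refine ((hFAB s v).sub h2).congr_deriv (Eq.symm ?_)
      have key : FA s v * A v * FB s v = FA s v * FB s v * A v := by
        rw [mul_assoc, hABcomm v v, mul_assoc]
      rw [key]
      noncomm_ring
    have := linODE_zero (fun v => A v + B v) (hA.add hB) _ hD s
      (by simp [hFAB0, hFA0, hFB0]) t
    exact sub_eq_zero.mp this
  · intro s t
    set e : ℝ → ℝ := fun u => Real.exp (-∫ x in s..u, r x) with he_def
    have hint : ∀ u : ℝ, HasDerivAt (fun v => ∫ x in s..v, r x) (r u) u := fun u =>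
      intervalIntegral.integral_hasDerivAt_right (hr.intervalIntegrable s u)
        (hr.stronglyMeasurableAtFilter _ _) hr.continuousAt
    have he : ∀ u : ℝ, HasDerivAt e (-(r u) * e u) u := by
      intro u
      have := ((hint u).neg).exp
      simpa [he_def, mul_comm] using this
    have hD : ∀ v : ℝ, HasDerivAt (fun v => FMr s v - e v • FM s v)
        ((FMr s v - e v • FM s v) * (M v - r v • 1)) v := by
      intro v
      have h2 := (he v).smul (hFM s v)
      refine ((hFMr s v).sub h2).congr_deriv (Eq.symm ?_)
      simp only [sub_mul, smul_mul_assoc, mul_sub, Matrix.mul_smul, mul_one, smul_sub,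
        smul_smul]
      module
    have := linODE_zero (fun v => M v - r v • 1)
      (hM.sub (hr.smul continuous_const)) _ hD s
      (by simp [he_def, hFMr0, hFM0]) t
    exact sub_eq_zero.mp this
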